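/- Let G be a simple graph with n vertices and e edges. Then, as integers, e·(n − e − 1) ≤ f(G) ≤ e·(n − 2). -/

import Mathlib

open Finset

open Classical in
/-- A triple of distinct vertices is *frustrated* if it induces an odd number of edges. -/
noncomputable def frustrated {V : Type*} (G : SimpleGraph V) (u v w : V) : Prop :=
  Odd ((if G.Adj u v then 1 else 0) + (if G.Adj u w then 1 else 0) +
       (if G.Adj v w then 1 else 0) : ℕ)

/-- The number of frustrated triangles of `G`: the number of 3-element vertex subsets
inducing an odd number of edges. -/
noncomputable def fCount {V : Type*} [Fintype V] [DecidableEq V] (G : SimpleGraph V) : ℕ := by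
  classical
  exact ((Finset.univ.powersetCard 3).filter
    (fun s : Finset V => ∃ u v w : V, u ≠ v ∧ u ≠ w ∧ v ≠ w ∧ s = {u, v, w} ∧
      frustrated G u v w)).card

namespace FCountAux

variable {n : ℕ}

/-- The vertex set of a `Sym2` as a `Finset`. -/
def sset (a : Sym2 (Fin n)) : Finset (Fin n) := Finset.univ.filter (· ∈ a)

lemma mem_sset {a : Sym2 (Fin n)} {x : Fin n} : x ∈ sset a ↔ x ∈ a := by simp [sset]

lemma sset_pair (x y : Fin n) : sset s(x, y) = ({x, y} : Finset (Fin n)) := by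
  ext z; simp [mem_sset, Sym2.mem_iff]

open Classical in
/-- The set of frustrated triples. -/
noncomputable def TT (G : SimpleGraph (Fin n)) : Finset (Finset (Fin n)) :=
  (Finset.univ.powersetCard 3).filter
    (fun s : Finset (Fin n) => ∃ u v w : Fin n, u ≠ v ∧ u ≠ w ∧ v ≠ w ∧ s = {u, v, w} ∧
      frustrated G u v w)

lemma fCount_eq (G : SimpleGraph (Fin n)) : fCount G = (TT G).card := by
  unfold fCount TT; congr

lemma frustrated_adj {G : SimpleGraph (Fin n)} {u v w : Fin n}
    (h : frustrated G u v w) : G.Adj u v ∨ G.Adj u w ∨ G.Adj v w := by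
  by_contra hc
  push_neg at hc
  simp [frustrated, hc.1, hc.2.1, hc.2.2] at h

lemma frustrated_of_one {G : SimpleGraph (Fin n)} {u v w : Fin n}
    (h1 : G.Adj u v) (h2 : ¬ G.Adj u w) (h3 : ¬ G.Adj v w) : frustrated G u v w := by
  simp [frustrated, h1, h2, h3]

lemma mem_TT {G : SimpleGraph (Fin n)} {s : Finset (Fin n)} :
    s ∈ TT G ↔ s ∈ Finset.univ.powersetCard 3 ∧
      ∃ u v w : Fin n, u ≠ v ∧ u ≠ w ∧ v ≠ w ∧ s = {u, v, w} ∧ frustrated G u v w := by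
  classical
  rw [TT]
  rw [Finset.filter_congr_decidable]
  exact Finset.mem_filter

/-- Reconstruct a triple from an edge and a third vertex. -/
def tri (p : Sym2 (Fin n) × Fin n) : Finset (Fin n) := insert p.2 (sset p.1)

variable (G : SimpleGraph (Fin n)) [DecidableRel G.Adj]

/-- Vertices off the edge `a`. -/
def Da (a : Sym2 (Fin n)) : Finset (Fin n) := (sset a)ᶜ

/-- Vertices off the edge `a` adjacent to neither endpoint. -/
def Ba (a : Sym2 (Fin n)) : Finset (Fin n) :=
  (Da a).filter (fun w => ∀ x ∈ a, ¬ G.Adj x w)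

/-- Vertices off the edge `a` adjacent to some endpoint. -/
def bad (a : Sym2 (Fin n)) : Finset (Fin n) :=
  (Da a).filter (fun w => ¬ ∀ x ∈ a, ¬ G.Adj x w)

def tUp : Finset (Sym2 (Fin n) × Fin n) :=
  G.edgeFinset.biUnion (fun a => {a} ×ˢ Da a)

def tLow : Finset (Sym2 (Fin n) × Fin n) :=
  G.edgeFinset.biUnion (fun a => {a} ×ˢ Ba G a)

lemma rep {a : Sym2 (Fin n)} (ha : a ∈ G.edgeFinset) :
    ∃ x y : Fin n, a = s(x, y) ∧ G.Adj x y ∧ x ≠ y := by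
  induction a using Sym2.ind with
  | _ x y => exact ⟨x, y, rfl, by simpa using ha, (by simpa using ha : G.Adj x y).ne⟩

lemma hdisj (D : Sym2 (Fin n) → Finset (Fin n)) :
    ∀ a ∈ G.edgeFinset, ∀ b ∈ G.edgeFinset, a ≠ b →
      Disjoint ({a} ×ˢ D a) ({b} ×ˢ D b) := by
  intro a _ b _ hab
  simp only [Finset.disjoint_left]
  rintro ⟨c, w⟩ hc hb
  simp only [Finset.mem_product, Finset.mem_singleton] at hc hb
  exact hab (hc.1 ▸ hb.1 ▸ rfl)

lemma cardUp : (tUp G).card = ∑ a ∈ G.edgeFinset, (Da a).card := by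
  rw [tUp, Finset.card_biUnion (hdisj G Da)]
  exact Finset.sum_congr rfl (fun a _ => by simp)

lemma cardLow : (tLow G).card = ∑ a ∈ G.edgeFinset, (Ba G a).card := by
  rw [tLow, Finset.card_biUnion (hdisj G (Ba G))]
  exact Finset.sum_congr rfl (fun a _ => by simp)

lemma memUp (p : Sym2 (Fin n) × Fin n) :
    p ∈ tUp G ↔ p.1 ∈ G.edgeFinset ∧ p.2 ∈ Da p.1 := by
  obtain ⟨a, w⟩ := p
  simp only [tUp, Finset.mem_biUnion, Finset.mem_product, Finset.mem_singleton]
  constructor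
  · rintro ⟨b, hb, rfl, hw⟩; exact ⟨hb, hw⟩
  · rintro ⟨ha, hw⟩; exact ⟨a, ha, rfl, hw⟩

lemma memLow (p : Sym2 (Fin n) × Fin n) :
    p ∈ tLow G ↔ p.1 ∈ G.edgeFinset ∧ p.2 ∈ Ba G p.1 := by
  obtain ⟨a, w⟩ := p
  simp only [tLow, Finset.mem_biUnion, Finset.mem_product, Finset.mem_singleton]
  constructor
  · rintro ⟨b, hb, rfl, hw⟩; exact ⟨hb, hw⟩
  · rintro ⟨ha, hw⟩; exact ⟨a, ha, rfl, hw⟩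

lemma two_le {a : Sym2 (Fin n)} (ha : a ∈ G.edgeFinset) : 2 ≤ n := by
  obtain ⟨x, y, rfl, hadj, hxy⟩ := rep G ha
  calc 2 = ({x, y} : Finset (Fin n)).card := (Finset.card_pair hxy).symm
  _ ≤ Finset.univ.card := Finset.card_le_card (Finset.subset_univ _)
  _ = n := by simp

lemma cardDa {a : Sym2 (Fin n)} (ha : a ∈ G.edgeFinset) : (Da a).card = n - 2 := by
  obtain ⟨x, y, rfl, hadj, hxy⟩ := rep G ha
  simp only [Da, Finset.card_compl, sset_pair, Finset.card_pair hxy, Fintype.card_fin]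

lemma upper : (TT G).card ≤ (tUp G).card := by
  apply Finset.card_le_card_of_surjOn tri
  intro s hs
  rw [Finset.mem_coe, mem_TT] at hs
  obtain ⟨hs3, u, v, w, huv, huw, hvw, rfl, hfr⟩ := hs
  have hadj := frustrated_adj hfr
  rcases hadj with h1 | h1
  · refine ⟨(s(u, v), w), ?_, ?_⟩
    · rw [Finset.mem_coe, memUp]
      refine ⟨by simpa using h1, ?_⟩
      simp [Da, mem_sset, Sym2.mem_iff, Ne.symm huw, Ne.symm hvw]
    · show insert w (sset s(u, v)) = _
      rw [sset_pair]; ext z; simp; tauto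
  rcases h1 with h2 | h3
  · refine ⟨(s(u, w), v), ?_, ?_⟩
    · rw [Finset.mem_coe, memUp]
      refine ⟨by simpa using h2, ?_⟩
      simp [Da, mem_sset, Sym2.mem_iff, Ne.symm huv, hvw]
    · show insert v (sset s(u, w)) = _
      rw [sset_pair]; ext z; simp; tauto
  · refine ⟨(s(v, w), u), ?_, ?_⟩
    · rw [Finset.mem_coe, memUp]
      refine ⟨by simpa using h3, ?_⟩
      simp [Da, mem_sset, Sym2.mem_iff, huv, huw]
    · show insert u (sset s(v, w)) = _
      rw [sset_pair]

lemma lower : (tLow G).card ≤ (TT G).card := by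
  apply Finset.card_le_card_of_injOn tri
  · rintro ⟨a, w⟩ hp
    rw [Finset.mem_coe, memLow] at hp
    obtain ⟨ha, hw⟩ := hp
    obtain ⟨x, y, rfl, hadj, hxy⟩ := rep G ha
    simp only [Ba, Finset.mem_filter, Da, Finset.mem_compl, mem_sset, Sym2.mem_iff] at hw
    obtain ⟨hwxy, hnadj⟩ := hw
    push_neg at hwxy
    have hnx : ¬ G.Adj x w := hnadj x (by simp [Sym2.mem_iff])
    have hny : ¬ G.Adj y w := hnadj y (by simp [Sym2.mem_iff])
    show insert w (sset s(x, y)) ∈ TT G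
    rw [sset_pair, mem_TT]
    refine ⟨?_, x, y, w, hxy, Ne.symm hwxy.1, Ne.symm hwxy.2, ?_, ?_⟩
    · rw [Finset.mem_powersetCard]
      refine ⟨Finset.subset_univ _, ?_⟩
      rw [Finset.card_insert_of_notMem (by simp [hwxy.1, hwxy.2]), Finset.card_pair hxy]
    · ext z; simp; tauto
    · exact frustrated_of_one hadj hnx hny
  · rintro ⟨a1, w1⟩ hp ⟨a2, w2⟩ hq heq
    rw [Finset.mem_coe, memLow] at hp hq
    obtain ⟨ha1, hw1⟩ := hp
    obtain ⟨ha2, hw2⟩ := hq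
    simp only [Ba, Finset.mem_filter, Da, Finset.mem_compl, mem_sset] at hw1 hw2
    obtain ⟨hw1a, hn1⟩ := hw1
    obtain ⟨hw2a, hn2⟩ := hw2
    have heq' : insert w1 (sset a1) = insert w2 (sset a2) := heq
    have hww : w1 = w2 := by
      by_contra hne
      have h1 : w1 ∈ insert w2 (sset a2) := heq' ▸ Finset.mem_insert_self w1 (sset a1)
      have h1' : w1 ∈ a2 := by
        rcases Finset.mem_insert.1 h1 with h | h
        · exact absurd h hne
        · exact mem_sset.1 h
      obtain ⟨x2, y2, ha2eq, hadj2, hxy2⟩ := rep G ha2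
      subst ha2eq
      rcases (Sym2.mem_iff).1 h1' with rfl | rfl
      · have hy2 : y2 ∈ insert w1 (sset a1) := by
          rw [heq']; exact Finset.mem_insert_of_mem (mem_sset.2 (by simp [Sym2.mem_iff]))
        rcases Finset.mem_insert.1 hy2 with h | h
        · exact hxy2 h.symm
        · exact hn1 y2 (mem_sset.1 h) hadj2.symm
      · have hx2 : x2 ∈ insert w1 (sset a1) := by
          rw [heq']; exact Finset.mem_insert_of_mem (mem_sset.2 (by simp [Sym2.mem_iff]))
        rcases Finset.mem_insert.1 hx2 with h | h
        · exact hxy2 h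
        · exact hn1 x2 (mem_sset.1 h) hadj2
    subst hww
    have hsets : sset a1 = sset a2 := by
      have e1 : (insert w1 (sset a1)).erase w1 = sset a1 :=
        Finset.erase_insert (by simpa [mem_sset] using hw1a)
      have e2 : (insert w1 (sset a2)).erase w1 = sset a2 :=
        Finset.erase_insert (by simpa [mem_sset] using hw2a)
      rw [← e1, ← e2, heq']
    have : a1 = a2 := by
      apply Sym2.ext
      intro z
      rw [← mem_sset, ← mem_sset, hsets]
    rw [this]

lemma cardsplit (a : Sym2 (Fin n)) : (Ba G a).card + (bad G a).card = (Da a).card :=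
  Finset.card_filter_add_card_filter_not _

lemma cardbad {a : Sym2 (Fin n)} (ha : a ∈ G.edgeFinset) :
    (bad G a).card ≤ G.edgeFinset.card - 1 := by
  obtain ⟨x, y, ha_eq, hadj, hxy⟩ := rep G ha
  have key : (bad G a).card ≤ (G.edgeFinset.erase a).card := by
    apply Finset.card_le_card_of_injOn
      (fun w => if G.Adj x w then s(x, w) else s(y, w))
    · intro w hw
      simp only [bad, Finset.mem_coe, Finset.mem_filter, Da, Finset.mem_compl,
        mem_sset] at hw
      obtain ⟨hwa, hex⟩ := hw
      push_neg at hex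
      obtain ⟨z, hz, hzw⟩ := hex
      have hwx : w ≠ x := fun h => hwa (h ▸ (ha_eq ▸ by simp [Sym2.mem_iff]))
      have hwy : w ≠ y := fun h => hwa (h ▸ (ha_eq ▸ by simp [Sym2.mem_iff]))
      have hadjor : G.Adj x w ∨ G.Adj y w := by
        rw [ha_eq] at hz
        rcases (Sym2.mem_iff).1 hz with rfl | rfl
        · exact Or.inl hzw
        · exact Or.inr hzw
      by_cases hx : G.Adj x w
      · simp only [if_pos hx]
        rw [Finset.mem_coe, Finset.mem_erase]
        refine ⟨?_, by simpa using hx⟩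
        rw [ha_eq]
        intro hcon
        rcases Sym2.eq_iff.1 hcon with ⟨-, h⟩ | ⟨h, h'⟩
        · exact hwy h
        · exact hwx h'
      · simp only [if_neg hx]
        have hy : G.Adj y w := hadjor.resolve_left hx
        rw [Finset.mem_coe, Finset.mem_erase]
        refine ⟨?_, by simpa using hy⟩
        rw [ha_eq]
        intro hcon
        rcases Sym2.eq_iff.1 hcon with ⟨h, h'⟩ | ⟨h, h'⟩
        · exact hxy h.symm
        · exact hwx h'
    · intro w1 h1 w2 h2 hfeq
      simp only [bad, Finset.mem_coe, Finset.mem_filter, Da, Finset.mem_compl,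
        mem_sset] at h1 h2
      have hw1x : w1 ≠ x := fun h => h1.1 (h ▸ (ha_eq ▸ by simp [Sym2.mem_iff]))
      have hw1y : w1 ≠ y := fun h => h1.1 (h ▸ (ha_eq ▸ by simp [Sym2.mem_iff]))
      have hw2x : w2 ≠ x := fun h => h2.1 (h ▸ (ha_eq ▸ by simp [Sym2.mem_iff]))
      simp only at hfeq
      by_cases hx1 : G.Adj x w1 <;> by_cases hx2 : G.Adj x w2 <;>
        simp only [hx1, hx2, if_true, if_false, if_pos, if_neg, not_false_iff] at hfeq
      · rcases Sym2.eq_iff.1 hfeq with ⟨-, h⟩ | ⟨h, h'⟩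
        · exact h
        · exact absurd h.symm hw2x
      · rcases Sym2.eq_iff.1 hfeq with ⟨h, -⟩ | ⟨h, h'⟩
        · exact absurd h hxy
        · exact absurd h.symm hw2x
      · rcases Sym2.eq_iff.1 hfeq with ⟨h, -⟩ | ⟨h, h'⟩
        · exact absurd h.symm hxy
        · exact absurd h' hw1x
      · rcases Sym2.eq_iff.1 hfeq with ⟨-, h⟩ | ⟨h, h'⟩
        · exact h
        · exact absurd h' hw1y
  calc (bad G a).card ≤ (G.edgeFinset.erase a).card := key
  _ = G.edgeFinset.card - 1 := Finset.card_erase_of_mem ha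

end FCountAux

open FCountAux in
theorem fCount_bounds
    (n : ℕ) (G : SimpleGraph (Fin n)) (e : ℕ) (he : G.edgeSet.ncard = e) :
    (e : ℤ) * ((n : ℤ) - e - 1) ≤ (fCount G : ℤ) ∧ (fCount G : ℤ) ≤ (e : ℤ) * ((n : ℤ) - 2) := by
  classical
  have hE : G.edgeFinset.card = e := by
    rw [← he]; simp [SimpleGraph.edgeFinset, Set.ncard_eq_toFinset_card']
  have he1 : ∀ a ∈ G.edgeFinset, 1 ≤ e := by
    intro a ha
    rw [← hE]
    exact Finset.card_pos.2 ⟨a, ha⟩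
  have perEdge : ∀ a ∈ G.edgeFinset, ((n : ℤ) - e - 1) ≤ ((Ba G a).card : ℤ) := by
    intro a ha
    have h1 := cardsplit G a
    have h2 := cardbad G ha
    rw [hE] at h2
    have h3 := cardDa G ha
    have h4 := two_le G ha
    have h5 := he1 a ha
    have hz1 : ((Ba G a).card : ℤ) + ((bad G a).card : ℤ) = (n : ℤ) - 2 := by
      rw [← Nat.cast_add, h1, h3, Nat.cast_sub h4]; norm_num
    have hz2 : ((bad G a).card : ℤ) ≤ (e : ℤ) - 1 := by
      calc ((bad G a).card : ℤ) ≤ ((e - 1 : ℕ) : ℤ) := by exact_mod_cast h2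
      _ = (e : ℤ) - 1 := by rw [Nat.cast_sub h5]; norm_num
    omega
  have perEdgeUp : ∀ a ∈ G.edgeFinset, ((Da a).card : ℤ) ≤ (n : ℤ) - 2 := by
    intro a ha
    rw [cardDa G ha, Nat.cast_sub (two_le G ha)]
    norm_num
  rw [fCount_eq]
  constructor
  · calc (e : ℤ) * ((n : ℤ) - e - 1)
        = ∑ _a ∈ G.edgeFinset, ((n : ℤ) - e - 1) := by
          rw [Finset.sum_const, hE, nsmul_eq_mul]
    _ ≤ ∑ a ∈ G.edgeFinset, ((Ba G a).card : ℤ) := Finset.sum_le_sum perEdge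
    _ = ((tLow G).card : ℤ) := by rw [cardLow]; push_cast; ring
    _ ≤ ((TT G).card : ℤ) := by exact_mod_cast lower G
  · calc ((TT G).card : ℤ) ≤ ((tUp G).card : ℤ) := by exact_mod_cast upper G
    _ = ∑ a ∈ G.edgeFinset, ((Da a).card : ℤ) := by rw [cardUp]; push_cast; ring
    _ ≤ ∑ _a ∈ G.edgeFinset, ((n : ℤ) - 2) := Finset.sum_le_sum perEdgeUp
    _ = (e : ℤ) * ((n : ℤ) - 2) := by rw [Finset.sum_const, hE, nsmul_eq_mul]
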